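/- Let w be a finite sequence of distinct positive integers containing both i and i+1, and let M be any set (of marked values). Let w_M be the word formed by the letters of w belonging to M, listed in reverse order of their occurrence in w, followed by the letters of w not in M, in their order of occurrence. Then i ∈ Des(w_M) if and only if either (i ∈ Des(w) and i ∉ M) or (i ∉ Des(w) and i+1 ∈ M). -/

import Mathlib

/-- The descent set of a word with distinct letters: `i` such that both `i` and `i + 1`
occur, with `i + 1` occurring before `i`. -/
def DesList (w : List ℕ) : Set ℕ :=
  {i | i ∈ w ∧ (i + 1) ∈ w ∧ w.idxOf (i + 1) < w.idxOf i}

/-- The marked word `w_M`: the letters of `w` belonging to `M`, in reverse order of their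
occurrence in `w`, followed by the letters not in `M`, in their order of occurrence. -/
noncomputable def markedWordS (w : List ℕ) (M : Set ℕ) : List ℕ :=
  letI : DecidablePred (· ∈ M) := fun _ => Classical.propDecidable _
  (w.filter (fun x => decide (x ∈ M))).reverse ++ w.filter (fun x => decide (x ∉ M))

section Aux

open List

/-- For a nodup list, `[a, b]` is a sublist iff `a` occurs before `b`. -/
lemma pair_sublist_iff : ∀ {l : List ℕ}, l.Nodup → ∀ {a b : ℕ}, a ∈ l → b ∈ l → a ≠ b →
    ([a, b] <+ l ↔ l.idxOf a < l.idxOf b) := by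
  intro l
  induction l with
  | nil => intro _ a b ha; simp at ha
  | cons c t ih =>
    intro hnd a b ha hb hab
    rw [List.nodup_cons] at hnd
    by_cases hac : a = c
    · subst hac
      have hbt : b ∈ t := by
        rcases List.mem_cons.1 hb with h | h
        · exact absurd h.symm hab
        · exact h
      constructor
      · intro _
        rw [List.idxOf_cons_self, List.idxOf_cons_ne _ hab]
        omega
      · intro _
        exact List.cons_sublist_cons.2 (List.singleton_sublist.2 hbt)
    · by_cases hbc : b = c
      · subst hbc
        constructor
        · intro h
          cases h with
          | cons _ h' =>
            exact absurd (h'.subset (by simp)) hnd.1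
          | cons_cons _ h' => exact absurd rfl hac
        · intro h
          rw [List.idxOf_cons_self] at h
          omega
      · have hat : a ∈ t := by
          rcases List.mem_cons.1 ha with h | h
          · exact absurd h hac
          · exact h
        have hbt : b ∈ t := by
          rcases List.mem_cons.1 hb with h | h
          · exact absurd h hbc
          · exact h
        rw [List.idxOf_cons_ne _ (Ne.symm hac), List.idxOf_cons_ne _ (Ne.symm hbc)]
        constructor
        · intro h
          cases h with
          | cons _ h' => have := (ih hnd.2 hat hbt hab).1 h'; omega
          | cons_cons _ h' => exact absurd rfl hac
        · intro h
          have : t.idxOf a < t.idxOf b := by omega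
          exact ((ih hnd.2 hat hbt hab).2 this).cons c

/-- Transfer of relative order along a filter. -/
lemma filter_order (p : ℕ → Bool) {l : List ℕ} (hnd : l.Nodup) {a b : ℕ}
    (ha : a ∈ l) (hb : b ∈ l) (hab : a ≠ b) (hpa : p a = true) (hpb : p b = true) :
    (l.filter p).idxOf a < (l.filter p).idxOf b ↔ l.idxOf a < l.idxOf b := by
  have haf : a ∈ l.filter p := List.mem_filter.2 ⟨ha, hpa⟩
  have hbf : b ∈ l.filter p := List.mem_filter.2 ⟨hb, hpb⟩
  rw [← pair_sublist_iff (hnd.filter p) haf hbf hab, ← pair_sublist_iff hnd ha hb hab]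
  constructor
  · intro h; exact h.trans (List.filter_sublist (l := l))
  · intro h
    have := h.filter p
    simpa [List.filter, hpa, hpb] using this

/-- Relative order in the reverse of a nodup list. -/
lemma reverse_order {l : List ℕ} (hnd : l.Nodup) {a b : ℕ}
    (ha : a ∈ l) (hb : b ∈ l) (hab : a ≠ b) :
    l.reverse.idxOf a < l.reverse.idxOf b ↔ l.idxOf b < l.idxOf a := by
  have har : a ∈ l.reverse := List.mem_reverse.2 ha
  have hbr : b ∈ l.reverse := List.mem_reverse.2 hb
  rw [← pair_sublist_iff (List.nodup_reverse.2 hnd) har hbr hab, ← pair_sublist_iff hnd hb ha (Ne.symm hab)]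
  constructor
  · intro h
    have : [a, b].reverse <+ l.reverse.reverse := List.reverse_sublist.2 h
    simpa using this
  · intro h
    have : [b, a].reverse <+ l.reverse := List.reverse_sublist.2 h
    simpa using this

/-- Main combinatorial lemma, stated for a boolean marking predicate. -/
lemma main_general (w : List ℕ) (hnd : w.Nodup) (i : ℕ) (hi : i ∈ w) (hi1 : (i + 1) ∈ w)
    (p : ℕ → Bool) :
    ((w.filter p).reverse ++ w.filter (fun x => !p x)).idxOf (i + 1) <
      ((w.filter p).reverse ++ w.filter (fun x => !p x)).idxOf i ↔
    ((w.idxOf (i + 1) < w.idxOf i ∧ p i = false) ∨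
      (¬ (w.idxOf (i + 1) < w.idxOf i) ∧ p (i + 1) = true)) := by
  set A := (w.filter p).reverse with hA
  set B := w.filter (fun x => !p x) with hB
  have hne : (i + 1) ≠ i := by omega
  have hio : w.idxOf i ≠ w.idxOf (i + 1) := by
    intro h
    exact hne ((List.idxOf_inj hi1).1 h.symm)
  have memA : ∀ x, x ∈ A ↔ (x ∈ w ∧ p x = true) := by
    intro x; rw [hA, List.mem_reverse, List.mem_filter]
  have memB : ∀ x, x ∈ B ↔ (x ∈ w ∧ p x = false) := by
    intro x; rw [hB, List.mem_filter]; simp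
  by_cases hpi : p i = true <;> by_cases hpi1 : p (i + 1) = true
  · -- both marked : both in A
    have hiA : i ∈ A := (memA i).2 ⟨hi, hpi⟩
    have hi1A : (i + 1) ∈ A := (memA (i + 1)).2 ⟨hi1, hpi1⟩
    rw [List.idxOf_append_of_mem hiA, List.idxOf_append_of_mem hi1A, hA,
      reverse_order (hnd.filter p) (List.mem_filter.2 ⟨hi1, hpi1⟩)
        (List.mem_filter.2 ⟨hi, hpi⟩) hne,
      filter_order p hnd hi hi1 (Ne.symm hne) hpi hpi1]
    simp only [hpi, hpi1]
    simp
    omega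
  · -- i marked, i+1 unmarked
    have hiA : i ∈ A := (memA i).2 ⟨hi, hpi⟩
    have hi1B : (i + 1) ∉ A := by
      intro h; exact hpi1 ((memA (i + 1)).1 h).2
    rw [List.idxOf_append_of_mem hiA, List.idxOf_append_of_notMem hi1B]
    have h1 : A.idxOf i < A.length := List.idxOf_lt_length_iff.2 hiA
    constructor
    · intro h; exact absurd h (by omega)
    · rintro (⟨_, h2⟩ | ⟨_, h2⟩)
      · simp [hpi] at h2
      · exact absurd h2 hpi1
  · -- i unmarked, i+1 marked
    have hi1A : (i + 1) ∈ A := (memA (i + 1)).2 ⟨hi1, hpi1⟩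
    have hiB : i ∉ A := by
      intro h; exact hpi ((memA i).1 h).2
    rw [List.idxOf_append_of_mem hi1A, List.idxOf_append_of_notMem hiB]
    have h1 : A.idxOf (i + 1) < A.length := List.idxOf_lt_length_iff.2 hi1A
    have hpif : p i = false := by simpa using hpi
    constructor
    · intro _
      by_cases hd : w.idxOf (i + 1) < w.idxOf i
      · left; exact ⟨hd, hpif⟩
      · right; exact ⟨hd, hpi1⟩
    · intro _; omega
  · -- both unmarked : both in B
    have hiB : i ∈ B := (memB i).2 ⟨hi, by simpa using hpi⟩
    have hi1B : (i + 1) ∈ B := (memB (i + 1)).2 ⟨hi1, by simpa using hpi1⟩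
    have hiA : i ∉ A := by intro h; exact hpi ((memA i).1 h).2
    have hi1A : (i + 1) ∉ A := by intro h; exact hpi1 ((memA (i + 1)).1 h).2
    rw [List.idxOf_append_of_notMem hiA, List.idxOf_append_of_notMem hi1A, hB]
    rw [Nat.add_lt_add_iff_left,
      filter_order (fun x => !p x) hnd hi1 hi hne (by simp [Bool.not_eq_true] at hpi1 ⊢; exact hpi1) (by simp [Bool.not_eq_true] at hpi ⊢; exact hpi)]
    have hpi' : p i = false := by simpa using hpi
    have hpi1' : p (i + 1) = false := by simpa using hpi1
    simp [hpi', hpi1']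

end Aux

/-- For a word `w` of distinct positive integers containing `i` and
`i + 1`, and any set `M` of marked values: `i ∈ Des(w_M)` iff either `i ∈ Des(w)` and
`i ∉ M`, or `i ∉ Des(w)` and `i + 1 ∈ M`. -/
theorem stmt12 (w : List ℕ) (hpos : ∀ x ∈ w, 0 < x) (hnd : w.Nodup)
    (i : ℕ) (hi : i ∈ w) (hi1 : (i + 1) ∈ w) (M : Set ℕ) :
    i ∈ DesList (markedWordS w M) ↔
      ((i ∈ DesList w ∧ i ∉ M) ∨ (i ∉ DesList w ∧ (i + 1) ∈ M)) := by
  classical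
  letI : DecidablePred (· ∈ M) := fun _ => Classical.propDecidable _
  set p : ℕ → Bool := fun x => decide (x ∈ M) with hp
  have hfilter : (w.filter (fun x => decide (x ∉ M))) = w.filter (fun x => !p x) := by
    apply List.filter_congr
    intro x _
    simp [hp]
  have hwM : markedWordS w M = (w.filter p).reverse ++ w.filter (fun x => !p x) := by
    rw [markedWordS]
    congr 1
  have hmemM : ∀ x ∈ w, x ∈ markedWordS w M := by
    intro x hx
    rw [hwM]
    by_cases h : p x = true
    · exact List.mem_append_left _ (List.mem_reverse.2 (List.mem_filter.2 ⟨hx, h⟩))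
    · exact List.mem_append_right _ (List.mem_filter.2 ⟨hx, by simpa using h⟩)
  have key := main_general w hnd i hi hi1 p
  rw [← hwM] at key
  have hDesw : i ∈ DesList w ↔ w.idxOf (i + 1) < w.idxOf i := by
    simp [DesList, hi, hi1]
  have hDeswM : i ∈ DesList (markedWordS w M) ↔
      (markedWordS w M).idxOf (i + 1) < (markedWordS w M).idxOf i := by
    simp [DesList, hmemM i hi, hmemM (i + 1) hi1]
  rw [hDeswM, key, hDesw]
  have hpi : p i = true ↔ i ∈ M := by simp [hp]
  have hpi1 : p (i + 1) = true ↔ (i + 1) ∈ M := by simp [hp]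
  constructor
  · rintro (⟨h1, h2⟩ | ⟨h1, h2⟩)
    · left; exact ⟨h1, fun hm => by simp [hp, hm] at h2⟩
    · right; exact ⟨h1, hpi1.1 h2⟩
  · rintro (⟨h1, h2⟩ | ⟨h1, h2⟩)
    · left; exact ⟨h1, by simp [hp, h2]⟩
    · right; exact ⟨h1, hpi1.2 h2⟩
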